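/- In a symmetric friend-oriented hedonic game, any partition into connected components of the friendship graph is Nash stable, individually stable, contractually individually stable, and individually rational. -/

import Mathlib

set_option linter.unusedSectionVars false


open Finset

section HedonicDefs

variable {α : Type*} [DecidableEq α] [Fintype α]

/-- Additive utility of player `i` in coalition `S`. -/
def util (w : α → α → ℤ) (S : Finset α) (i : α) : ℤ := ∑ j ∈ S, w i j

/-- `π` is a partition of the player set `V`: every player of `V` lies in its own
coalition, coalitions are contained in `V`, and membership determines the coalition. -/
def IsPartition (V : Finset α) (π : α → Finset α) : Prop :=
  (∀ i ∈ V, i ∈ π i ∧ π i ⊆ V) ∧ ∀ i ∈ V, ∀ j ∈ π i, π j = π i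

/-- `S` is a coalition of the partition `π` on `V`, or the empty coalition. -/
def IsCoalitionOf (V : Finset α) (π : α → Finset α) (S : Finset α) : Prop :=
  S = ∅ ∨ ∃ j ∈ V, S = π j

/-- Player `i` has an NS-deviation from `π i` to `S`. -/
def NSDev (w : α → α → ℤ) (V : Finset α) (π : α → Finset α) (i : α) (S : Finset α) : Prop :=
  IsCoalitionOf V π S ∧ S ≠ π i ∧ i ∉ S ∧ util w (π i) i < util w (insert i S) i

/-- Player `i` has an IS-deviation from `π i` to `S`: an NS-deviation accepted by
all members of the target coalition `S`. -/
def ISDev (w : α → α → ℤ) (V : Finset α) (π : α → Finset α) (i : α) (S : Finset α) : Prop :=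
  NSDev w V π i S ∧ ∀ j ∈ S, util w S j ≤ util w (insert i S) j

/-- Player `i` has a CIS-deviation from `π i` to `S`: an IS-deviation also accepted by
all members of the abandoned coalition. -/
def CISDev (w : α → α → ℤ) (V : Finset α) (π : α → Finset α) (i : α) (S : Finset α) : Prop :=
  ISDev w V π i S ∧ ∀ j ∈ (π i).erase i, util w (π i) j ≤ util w ((π i).erase i) j

def NashStable (w : α → α → ℤ) (V : Finset α) (π : α → Finset α) : Prop :=
  ∀ i ∈ V, ∀ S : Finset α, ¬ NSDev w V π i S

def IndStable (w : α → α → ℤ) (V : Finset α) (π : α → Finset α) : Prop :=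
  ∀ i ∈ V, ∀ S : Finset α, ¬ ISDev w V π i S

def CIStable (w : α → α → ℤ) (V : Finset α) (π : α → Finset α) : Prop :=
  ∀ i ∈ V, ∀ S : Finset α, ¬ CISDev w V π i S

/-- Individual rationality: each player weakly prefers its coalition to being alone
(being alone gives utility `w i i = 0`). -/
def IndRational (w : α → α → ℤ) (V : Finset α) (π : α → Finset α) : Prop :=
  ∀ i ∈ V, 0 ≤ util w (π i) i

/-- Core stability: no nonempty coalition strongly blocks `π`. -/
def CoreStable (w : α → α → ℤ) (V : Finset α) (π : α → Finset α) : Prop :=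
  ¬ ∃ S : Finset α, S ⊆ V ∧ S.Nonempty ∧ ∀ i ∈ S, util w (π i) i < util w S i

/-- `π` is robust for the stability notion `St` under deletion of at most `k` players:
`π` satisfies `St` and so does its truncation after removing any `X` with `|X| ≤ k`. -/
def Robust (St : Finset α → (α → Finset α) → Prop) (V : Finset α)
    (π : α → Finset α) (k : ℕ) : Prop :=
  St V π ∧ ∀ X ⊆ V, X.card ≤ k → St (V \ X) (fun i => π i \ X)

/-- Symmetric friend-oriented game: symmetric weights, zero on the diagonal, and each
off-diagonal weight equals `n` (friends) or `-1` (enemies), where `n` is the number of players. -/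
def FriendOriented (w : α → α → ℤ) : Prop :=
  (∀ i j : α, w i j = w j i) ∧ (∀ i : α, w i i = 0) ∧
    ∀ i j : α, i ≠ j → w i j = (Fintype.card α : ℤ) ∨ w i j = -1

/-- `j` is a friend of `i`. -/
def Friend (w : α → α → ℤ) (i j : α) : Prop := i ≠ j ∧ 0 < w i j


instance (w : α → α → ℤ) (i j : α) : Decidable (Friend w i j) :=
  inferInstanceAs (Decidable (_ ∧ _))

/-- `S` is a clique of the friendship graph. -/
def IsClique (w : α → α → ℤ) (S : Finset α) : Prop :=
  ∀ i ∈ S, ∀ j ∈ S, i ≠ j → Friend w i j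

/-- Two players lie in the same connected component of the friendship graph. -/
def SameComp (w : α → α → ℤ) : α → α → Prop :=
  Relation.ReflTransGen (fun a b => Friend w a b)

/-- The connected component of `v` in the friendship graph, as a set. -/
def comp (w : α → α → ℤ) (v : α) : Set α := {u | SameComp w v u}

end HedonicDefs

section Aux
variable {α : Type*} [DecidableEq α] [Fintype α]

private lemma friend_symm {w : α → α → ℤ} (hw : FriendOriented w) :
    Symmetric (Friend w) := fun a b h => ⟨h.1.symm, (hw.1 a b) ▸ h.2⟩

private lemma samecomp_symm {w : α → α → ℤ} (hw : FriendOriented w) :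
    Symmetric (SameComp w) := (fun _ _ h => (@Relation.ReflTransGen.stdSymm _ _ ⟨fun x y hxy => friend_symm hw hxy⟩).symm _ _ h : Symmetric (SameComp w))

private lemma comp_eq {w : α → α → ℤ} (hw : FriendOriented w)
    {π : α → Finset α} (hcomp : ∀ i j : α, j ∈ π i ↔ SameComp w i j)
    {i j : α} (hij : SameComp w i j) : π j = π i := by
  ext k
  rw [hcomp, hcomp]
  constructor
  · exact fun h => hij.trans h
  · exact fun h => ((show Symmetric (SameComp w) from fun _ _ h => (@Relation.ReflTransGen.stdSymm _ _ ⟨fun x y hxy => friend_symm hw hxy⟩).symm _ _ h) hij).trans h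

private lemma enemy {w : α → α → ℤ} (hw : FriendOriented w) [Nonempty α] {i k : α}
    (hne : i ≠ k) (hnf : ¬ Friend w i k) : w i k = -1 := by
  rcases hw.2.2 i k hne with h | h
  · exact absurd ⟨hne, by rw [h]; exact_mod_cast Fintype.card_pos⟩ hnf
  · exact h

private lemma util_comp_nonneg {w : α → α → ℤ} (hw : FriendOriented w)
    {π : α → Finset α} (hcomp : ∀ i j : α, j ∈ π i ↔ SameComp w i j) (i : α) :
    0 ≤ util w (π i) i := by
  have hi : i ∈ π i := (hcomp i i).2 Relation.ReflTransGen.refl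
  by_cases hall : ∀ j ∈ π i, j = i
  · have hs : π i = {i} := Finset.eq_singleton_iff_unique_mem.2 ⟨hi, hall⟩
    simp [util, hs, hw.2.1]
  · push_neg at hall
    obtain ⟨j, hj, hji⟩ := hall
    have hsc : SameComp w i j := (hcomp i j).1 hj
    obtain ⟨k, hik, -⟩ : ∃ k, Friend w i k ∧ SameComp w k j := by
      rcases Relation.ReflTransGen.cases_head hsc with h | h
      · exact absurd h.symm hji
      · exact h
    have hk : k ∈ π i := (hcomp i k).2 (Relation.ReflTransGen.single hik)
    have hki : k ≠ i := fun h => hik.1 h.symm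
    have hwik : w i k = (Fintype.card α : ℤ) := by
      rcases hw.2.2 i k hik.1 with h | h
      · exact h
      · exfalso; have := hik.2; omega
    have hk' : k ∈ (π i).erase i := Finset.mem_erase.2 ⟨hki, hk⟩
    set s : Finset α := ((π i).erase i).erase k with hsdef
    have hsum : util w (π i) i = w i i + (w i k + ∑ x ∈ s, w i x) := by
      rw [util, ← Finset.add_sum_erase _ _ hi, ← Finset.add_sum_erase _ _ hk']
    have hlb : ∀ x ∈ s, (-1 : ℤ) ≤ w i x := by
      intro x hx
      have hxi : x ≠ i := (Finset.mem_erase.1 (Finset.mem_of_mem_erase hx)).1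
      rcases hw.2.2 i x (Ne.symm hxi) with h | h
      · omega
      · omega
    have hsumlb : (s.card : ℤ) * (-1) ≤ ∑ x ∈ s, w i x := by
      have := Finset.card_nsmul_le_sum s (fun x => w i x) (-1 : ℤ) hlb
      simpa [nsmul_eq_mul] using this
    have hc1 : s.card = (π i).card - 2 := by
      rw [hsdef, Finset.card_erase_of_mem hk', Finset.card_erase_of_mem hi]; omega
    have hc2 : (π i).card ≤ Fintype.card α := Finset.card_le_univ _
    have hc3 : 2 ≤ (π i).card := by
      have : ({i, k} : Finset α) ⊆ π i := by
        intro x hx; rcases Finset.mem_insert.1 hx with rfl | hx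
        · exact hi
        · rw [Finset.mem_singleton.1 hx]; exact hk
      calc 2 = ({i, k} : Finset α).card := by rw [Finset.card_insert_of_notMem (by simpa using fun h => hki h.symm), Finset.card_singleton]
        _ ≤ (π i).card := Finset.card_le_card this
    have hcard : (s.card : ℤ) ≤ (Fintype.card α : ℤ) - 2 := by omega
    rw [hsum, hw.2.1, hwik]
    linarith

private lemma no_nsdev {w : α → α → ℤ} (hw : FriendOriented w)
    {π : α → Finset α} (hcomp : ∀ i j : α, j ∈ π i ↔ SameComp w i j)
    (i : α) (S : Finset α) : ¬ NSDev w Finset.univ π i S := by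
  rintro ⟨hS, hSne, hiS, hlt⟩
  have : Nonempty α := ⟨i⟩
  have h0 : 0 ≤ util w (π i) i := util_comp_nonneg hw hcomp i
  have hall : ∀ k ∈ S, w i k = -1 := by
    intro k hkS
    rcases hS with rfl | ⟨j, -, rfl⟩
    · simp at hkS
    · have hjk : SameComp w j k := (hcomp j k).1 hkS
      have hik : i ≠ k := fun h => hiS (h ▸ hkS)
      refine enemy hw hik (fun hf => hSne ?_)
      exact comp_eq hw hcomp
        ((Relation.ReflTransGen.single hf).trans
          ((show Symmetric (SameComp w) from fun _ _ h => (@Relation.ReflTransGen.stdSymm _ _ ⟨fun x y hxy => friend_symm hw hxy⟩).symm _ _ h) hjk))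
  have hub : util w (insert i S) i ≤ 0 := by
    calc util w (insert i S) i = w i i + ∑ k ∈ S, w i k := Finset.sum_insert hiS
      _ = ∑ k ∈ S, w i k := by rw [hw.2.1]; ring
      _ = ∑ k ∈ S, (-1 : ℤ) := Finset.sum_congr rfl hall
      _ = -(S.card : ℤ) := by simp
      _ ≤ 0 := by simp
  linarith

end Aux

/-- In a symmetric friend-oriented game, the partition into connected
components of the friendship graph is Nash stable, individually stable, contractually
individually stable, and individually rational. -/
theorem components_partition_stable {α : Type*} [DecidableEq α] [Fintype α]
    (w : α → α → ℤ) (hw : FriendOriented w)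
    (π : α → Finset α) (hcomp : ∀ i j : α, j ∈ π i ↔ SameComp w i j) :
    NashStable w Finset.univ π ∧ IndStable w Finset.univ π ∧
      CIStable w Finset.univ π ∧ IndRational w Finset.univ π := by
  have hns : NashStable w Finset.univ π := fun i _ S => no_nsdev hw hcomp i S
  refine ⟨hns, fun i hi S h => no_nsdev hw hcomp i S h.1,
    fun i hi S h => no_nsdev hw hcomp i S h.1.1,
    fun i _ => util_comp_nonneg hw hcomp i⟩
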